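/- More generally, for a single rank-1 lattice Λ(z_ℓ,M_ℓ) and the set I_ℓ := {k ∈ I : k·z_ℓ ≢ h·z_ℓ (mod M_ℓ) for all h ∈ I \ {k}} of uniquely reconstructable frequencies, the union over k ∈ I_ℓ of the shifted dual-lattice sets {k + h : h ∈ Λ(z_ℓ,M_ℓ)^⊥ \ {0}} is a disjoint union contained in Z^d \ I, and consequently Σ_{k∈I_ℓ} Σ_{h∈Λ(z_ℓ,M_ℓ)^⊥\{0}} |f̂_{k+h}| ≤ Σ_{k∈Z^d\I} |f̂_k| for any function f with absolutely summable Fourier coefficients. -/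

import Mathlib

open scoped BigOperators

theorem stmt8 (d M : ℕ) (hM : 0 < M) (z : Fin d → ℤ) (I Il : Finset (Fin d → ℤ))
    (hIl : ∀ k, k ∈ Il ↔ k ∈ I ∧ ∀ h ∈ I, h ≠ k →
      ¬ ((∑ s, k s * z s) ≡ (∑ s, h s * z s) [ZMOD (M : ℤ)]))
    (fhat : (Fin d → ℤ) → ℂ) (hsum : Summable fun k => ‖fhat k‖) :
    (∀ k ∈ Il, ∀ h : Fin d → ℤ, h ≠ 0 → (∑ s, h s * z s) % (M : ℤ) = 0 → k + h ∉ I) ∧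
    (∀ k ∈ Il, ∀ k' ∈ Il, k ≠ k' → ∀ h h' : Fin d → ℤ, h ≠ 0 → h' ≠ 0 →
      (∑ s, h s * z s) % (M : ℤ) = 0 → (∑ s, h' s * z s) % (M : ℤ) = 0 →
      k + h ≠ k' + h') ∧
    (∑ k ∈ Il, ∑' h : {h : Fin d → ℤ // h ≠ 0 ∧ (∑ s, h s * z s) % (M : ℤ) = 0},
        ‖fhat (k + h.1)‖)
      ≤ ∑' k : {k : Fin d → ℤ // k ∉ I}, ‖fhat k.1‖ := by
  have hadd : ∀ k h : Fin d → ℤ, (∑ s, (k + h) s * z s) = (∑ s, k s * z s) + ∑ s, h s * z s := by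
    intro k h
    rw [← Finset.sum_add_distrib]
    exact Finset.sum_congr rfl (fun s _ => by simp [add_mul])
  have hcong : ∀ k h : Fin d → ℤ, (∑ s, h s * z s) % (M : ℤ) = 0 →
      (∑ s, (k + h) s * z s) ≡ (∑ s, k s * z s) [ZMOD (M : ℤ)] := by
    intro k h hh
    rw [hadd]
    have : (∑ s, h s * z s) ≡ 0 [ZMOD (M : ℤ)] :=
      (Int.modEq_zero_iff_dvd).mpr (Int.dvd_of_emod_eq_zero hh)
    calc (∑ s, k s * z s) + ∑ s, h s * z s
        ≡ (∑ s, k s * z s) + 0 [ZMOD (M : ℤ)] := Int.ModEq.add_left _ this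
      _ = ∑ s, k s * z s := by ring
  have part1 : ∀ k ∈ Il, ∀ h : Fin d → ℤ, h ≠ 0 → (∑ s, h s * z s) % (M : ℤ) = 0 →
      k + h ∉ I := by
    intro k hk h hh0 hhz hmem
    obtain ⟨hkI, hkuniq⟩ := (hIl k).mp hk
    have hne : k + h ≠ k := by
      intro e; apply hh0; have := congrArg (· - k) e; simpa using this
    exact hkuniq (k + h) hmem hne ((hcong k h hhz).symm)
  have part2 : ∀ k ∈ Il, ∀ k' ∈ Il, k ≠ k' → ∀ h h' : Fin d → ℤ, h ≠ 0 → h' ≠ 0 →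
      (∑ s, h s * z s) % (M : ℤ) = 0 → (∑ s, h' s * z s) % (M : ℤ) = 0 →
      k + h ≠ k' + h' := by
    intro k hk k' hk' hkk h h' hh0 hh0' hz hz' heq
    obtain ⟨hkI, hkuniq⟩ := (hIl k).mp hk
    obtain ⟨hkI', _⟩ := (hIl k').mp hk'
    apply hkuniq k' hkI' (Ne.symm hkk)
    calc (∑ s, k s * z s) ≡ (∑ s, (k + h) s * z s) [ZMOD (M : ℤ)] := (hcong k h hz).symm
      _ = (∑ s, (k' + h') s * z s) := by rw [heq]
      _ ≡ (∑ s, k' s * z s) [ZMOD (M : ℤ)] := hcong k' h' hz'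
  refine ⟨part1, part2, ?_⟩
  set P : (Fin d → ℤ) → Prop := fun h => h ≠ 0 ∧ (∑ s, h s * z s) % (M : ℤ) = 0 with hP
  let e : (Σ k : {k // k ∈ Il}, {h // P h}) → {k : Fin d → ℤ // k ∉ I} :=
    fun p => ⟨p.1.1 + p.2.1, part1 p.1.1 p.1.2 p.2.1 p.2.2.1 p.2.2.2⟩
  have einj : Function.Injective e := by
    rintro ⟨⟨k, hk⟩, ⟨h, hh⟩⟩ ⟨⟨k', hk'⟩, ⟨h', hh'⟩⟩ heq
    have heq' : k + h = k' + h' := congrArg Subtype.val heq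
    by_cases hkk : k = k'
    · subst hkk
      have : h = h' := by
        have := congrArg (· - k) heq'
        simpa [add_comm, add_sub_cancel_left] using this
      simp [this]
    · exact absurd heq' (part2 k hk k' hk' hkk h h' hh.1 hh'.1 hh.2 hh'.2)
  have hg : Summable fun k : {k : Fin d → ℤ // k ∉ I} => ‖fhat k.1‖ :=
    hsum.subtype _
  have hf : Summable fun p : (Σ k : {k // k ∈ Il}, {h // P h}) =>
      ‖fhat (p.1.1 + p.2.1)‖ := by
    have := hg.comp_injective einj
    exact this
  have key : (∑ k ∈ Il, ∑' h : {h // P h}, ‖fhat (k + h.1)‖)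
      = ∑' p : (Σ k : {k // k ∈ Il}, {h // P h}), ‖fhat (p.1.1 + p.2.1)‖ := by
    rw [hf.tsum_sigma, ← Finset.tsum_subtype]
  rw [key]
  exact Summable.tsum_le_tsum_of_inj e einj (fun c _ => norm_nonneg _) (fun p => le_refl _) hf hg
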